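/- For all n ≥ 2, the double sum ∑_{k=1}^{n-1} ∑_{n_1+⋯+n_k = n, n_i ≥ 1} ∏_{j=1}^k j^(n_j - 1) equals B_n - 1, where B_n is the n-th Bell number. -/

import Mathlib

open Finset

/-- The `n`-th Bell number: the number of partitions of an `n`-element set. -/
def bellNumber (n : ℕ) : ℕ :=
  Fintype.card (Finpartition (Finset.univ : Finset (Fin n)))

def IsGood {n : ℕ} (f : Fin n → Fin n) : Prop := ∀ i, f (f i) = f i ∧ f i ≤ i

instance {n : ℕ} : DecidablePred (IsGood (n := n)) := fun f => by
  unfold IsGood; infer_instance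

namespace BellAux

variable {n : ℕ}

noncomputable def minMap (P : Finpartition (Finset.univ : Finset (Fin n))) (i : Fin n) : Fin n :=
  (P.part i).min' ⟨i, P.mem_part (Finset.mem_univ i)⟩

lemma minMap_mem (P : Finpartition (Finset.univ : Finset (Fin n))) (i : Fin n) :
    minMap P i ∈ P.part i := Finset.min'_mem _ _

lemma part_minMap (P : Finpartition (Finset.univ : Finset (Fin n))) (i : Fin n) :
    P.part (minMap P i) = P.part i :=
  P.part_eq_of_mem (P.part_mem.2 (Finset.mem_univ i)) (minMap_mem P i)

lemma minMap_good (P : Finpartition (Finset.univ : Finset (Fin n))) : IsGood (minMap P) := by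
  intro i
  constructor
  · show (P.part (minMap P i)).min' _ = _
    simp only [part_minMap]
    rfl
  · exact Finset.min'_le _ _ (P.mem_part (Finset.mem_univ i))

lemma minMap_eq_iff_part_eq (P : Finpartition (Finset.univ : Finset (Fin n))) (a b : Fin n) :
    minMap P a = minMap P b ↔ P.part a = P.part b := by
  constructor
  · intro h
    rw [← part_minMap P a, h, part_minMap]
  · intro h
    unfold minMap
    congr 1

/-- The setoid associated to a good function. -/
def setoidOf (f : Fin n → Fin n) : Setoid (Fin n) :=
  ⟨fun a b => f a = f b, ⟨fun _ => rfl, Eq.symm, Eq.trans⟩⟩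

instance (f : Fin n → Fin n) : DecidableRel (setoidOf f).r := fun a b =>
  inferInstanceAs (Decidable (f a = f b))

lemma parts_eq_image (P : Finpartition (Finset.univ : Finset (Fin n))) :
    P.parts = Finset.univ.image P.part := by
  ext t
  simp only [Finset.mem_image, Finset.mem_univ, true_and]
  constructor
  · intro ht
    obtain ⟨a, ha⟩ := P.nonempty_of_mem_parts ht
    exact ⟨a, P.part_eq_of_mem ht ha⟩
  · rintro ⟨a, rfl⟩
    exact P.part_mem.2 (Finset.mem_univ a)

noncomputable def partEquiv (n : ℕ) :
    Finpartition (Finset.univ : Finset (Fin n)) ≃ {f : Fin n → Fin n // IsGood f} where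
  toFun P := ⟨minMap P, minMap_good P⟩
  invFun f := Finpartition.ofSetoid (setoidOf f.1)
  left_inv P := by
    apply Finpartition.ext
    rw [parts_eq_image, parts_eq_image]
    apply Finset.image_congr
    intro a _
    ext b
    rw [Finpartition.mem_part_ofSetoid_iff_rel]
    show minMap P a = minMap P b ↔ _
    rw [minMap_eq_iff_part_eq]
    exact eq_comm.trans (P.mem_part_iff_part_eq_part (Finset.mem_univ b) (Finset.mem_univ a)).symm
  right_inv f := by
    obtain ⟨f, hf⟩ := f
    apply Subtype.ext
    funext i
    show minMap (Finpartition.ofSetoid (setoidOf f)) i = f i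
    unfold minMap
    have hset : (Finpartition.ofSetoid (setoidOf f)).part i =
        Finset.univ.filter (fun b => f i = f b) := by
      ext b
      rw [Finpartition.mem_part_ofSetoid_iff_rel]
      simp only [Finset.mem_filter, Finset.mem_univ, true_and]
      rfl
    apply le_antisymm
    · apply Finset.min'_le
      rw [hset]
      simp only [Finset.mem_filter, Finset.mem_univ, true_and]
      exact (hf i).1.symm
    · apply Finset.le_min'
      intro b hb
      rw [hset] at hb
      simp only [Finset.mem_filter, Finset.mem_univ, true_and] at hb
      calc f i = f b := hb
        _ ≤ b := (hf b).2

lemma bell_eq (n : ℕ) :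
    bellNumber n = ((Finset.univ : Finset (Fin n → Fin n)).filter IsGood).card := by
  rw [bellNumber, Fintype.card_congr (partEquiv n), Fintype.card_subtype]

namespace Part2


/-- Sum side: number-weighted compositions. -/
def Wc (n k : ℕ) : ℕ :=
  ∑ c ∈ (Finset.Nat.antidiagonalTuple k n).filter (fun c => ∀ j, 0 < c j),
    ∏ j : Fin k, ((j : ℕ) + 1) ^ (c j - 1)

lemma Wc_zero_zero : Wc 0 0 = 1 := by
  simp [Wc, Finset.Nat.antidiagonalTuple_zero_zero]

lemma Wc_zero_succ (k : ℕ) : Wc 0 (k + 1) = 0 := by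
  rw [Wc, Finset.sum_eq_zero]
  intro c hc
  simp only [Finset.mem_filter, Finset.Nat.mem_antidiagonalTuple] at hc
  exfalso
  have h0 : c 0 = 0 := by
    have := Finset.sum_eq_zero_iff.mp hc.1
    exact this 0 (Finset.mem_univ _)
  have := hc.2 0
  omega

lemma Wc_succ_zero (n : ℕ) : Wc (n + 1) 0 = 0 := by
  simp [Wc, Finset.Nat.antidiagonalTuple_zero_succ]

lemma Wc_rec (n k : ℕ) : Wc (n + 1) (k + 1) = Wc n k + (k + 1) * Wc n (k + 1) := by
  rw [Wc, ← Finset.sum_filter_add_sum_filter_not _ (fun c => c (Fin.last k) = 1)]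
  congr 1
  · -- last part equals 1 : drop it
    rw [Wc]
    apply Finset.sum_nbij' (i := fun c => Fin.init c) (j := fun d => Fin.snoc d 1)
    · intro c hc
      simp only [Finset.mem_filter, Finset.Nat.mem_antidiagonalTuple] at hc ⊢
      obtain ⟨⟨hsum, hpos⟩, hlast⟩ := hc
      rw [Fin.sum_univ_castSucc, hlast] at hsum
      refine ⟨?_, fun j => hpos j.castSucc⟩
      simp only [Fin.init]
      omega
    · intro d hd
      simp only [Finset.mem_filter, Finset.Nat.mem_antidiagonalTuple] at hd ⊢
      obtain ⟨hsum, hpos⟩ := hd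
      refine ⟨⟨?_, ?_⟩, ?_⟩
      · rw [Fin.sum_univ_castSucc]
        simp only [Fin.snoc_castSucc, Fin.snoc_last]
        omega
      · intro j
        induction j using Fin.lastCases with
        | last => simp
        | cast j => simpa using hpos j
      · simp
    · intro c hc
      simp only [Finset.mem_filter] at hc
      have h := Fin.snoc_init_self c
      rwa [hc.2] at h
    · intro d _
      simp
    · intro c hc
      rw [Fin.prod_univ_castSucc]
      simp only [Finset.mem_filter] at hc
      rw [hc.2]
      simp [Fin.init]
  · -- last part at least 2 : decrease it by one
    rw [Wc, Finset.mul_sum]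
    apply Finset.sum_nbij' (i := fun c => Fin.snoc (Fin.init c) (c (Fin.last k) - 1))
      (j := fun d => Fin.snoc (Fin.init d) (d (Fin.last k) + 1))
    · intro c hc
      simp only [Finset.mem_filter, Finset.Nat.mem_antidiagonalTuple] at hc ⊢
      obtain ⟨⟨hsum, hpos⟩, hlast⟩ := hc
      rw [Fin.sum_univ_castSucc] at hsum
      have h2 : 2 ≤ c (Fin.last k) := by have := hpos (Fin.last k); omega
      constructor
      · rw [Fin.sum_univ_castSucc]
        simp only [Fin.snoc_castSucc, Fin.snoc_last]
        unfold Fin.init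
        omega
      · intro j
        induction j using Fin.lastCases with
        | last => simp; omega
        | cast j => simpa [Fin.init] using hpos j.castSucc
    · intro d hd
      simp only [Finset.mem_filter, Finset.Nat.mem_antidiagonalTuple] at hd ⊢
      obtain ⟨hsum, hpos⟩ := hd
      rw [Fin.sum_univ_castSucc] at hsum
      refine ⟨⟨?_, ?_⟩, ?_⟩
      · rw [Fin.sum_univ_castSucc]
        simp only [Fin.snoc_castSucc, Fin.snoc_last]
        unfold Fin.init
        omega
      · intro j
        induction j using Fin.lastCases with
        | last => simp
        | cast j => simpa [Fin.init] using hpos j.castSucc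
      · simp
        have := hpos (Fin.last k)
        omega
    · intro c hc
      simp only [Finset.mem_filter, Finset.Nat.mem_antidiagonalTuple] at hc
      obtain ⟨⟨_, hpos⟩, hlast⟩ := hc
      have h2 : 2 ≤ c (Fin.last k) := by have := hpos (Fin.last k); omega
      funext j
      induction j using Fin.lastCases with
      | last => simp; omega
      | cast j => simp [Fin.init]
    · intro d hd
      funext j
      induction j using Fin.lastCases with
      | last => simp
      | cast j => simp [Fin.init]
    · intro c hc
      simp only [Finset.mem_filter, Finset.Nat.mem_antidiagonalTuple] at hc
      obtain ⟨⟨_, hpos⟩, hlast⟩ := hc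
      have h2 : 2 ≤ c (Fin.last k) := by have := hpos (Fin.last k); omega
      rw [Fin.prod_univ_castSucc, Fin.prod_univ_castSucc, ← mul_assoc,
        mul_comm ((k:ℕ)+1), mul_assoc]
      congr 1
      · apply Finset.prod_congr rfl
        intro j _
        simp [Fin.init]
      · simp only [Fin.snoc_last, Fin.val_last]
        rw [← pow_succ']
        congr 1
        omega

lemma Wc_eq_zero_of_lt : ∀ n k, n < k → Wc n k = 0 := by
  intro n
  induction n with
  | zero => intro k hk; match k, hk with | (k+1), _ => exact Wc_zero_succ k
  | succ n ih =>
    intro k hk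
    match k, hk with
    | (k+1), hk =>
      rw [Wc_rec, ih k (by omega), ih (k+1) (by omega)]
      simp

lemma Wc_diag : ∀ n, Wc n n = 1 := by
  intro n
  induction n with
  | zero => exact Wc_zero_zero
  | succ n ih => rw [Wc_rec, ih, Wc_eq_zero_of_lt n (n+1) (by omega)]; simp



def fixCard {n : ℕ} (f : Fin n → Fin n) : ℕ :=
  (Finset.univ.filter fun i => f i = i).card

def Pc (n k : ℕ) : ℕ :=
  ((Finset.univ : Finset (Fin n → Fin n)).filter fun f => IsGood f ∧ fixCard f = k).card

variable {n : ℕ}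

/-- Restriction of a function on `Fin (n+1)` to `Fin n`. -/
def resF (f : Fin (n + 1) → Fin (n + 1)) (i : Fin n) : Fin n :=
  if h : (f i.castSucc : ℕ) < n then ⟨f i.castSucc, h⟩ else i

/-- Extension of a function on `Fin n` to `Fin (n+1)`, sending the last element to `p`. -/
def extF (g : Fin n → Fin n) (p : Fin (n + 1)) (i : Fin (n + 1)) : Fin (n + 1) :=
  if h : (i : ℕ) < n then (g ⟨i, h⟩).castSucc else p

lemma resF_coe {f : Fin (n + 1) → Fin (n + 1)} (hf : IsGood f) (i : Fin n) :
    ((resF f i : ℕ)) = f i.castSucc := by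
  have h : (f i.castSucc : ℕ) < n := lt_of_le_of_lt (by exact_mod_cast (hf i.castSucc).2) i.isLt
  rw [resF, dif_pos h]

lemma extF_castSucc (g : Fin n → Fin n) (p : Fin (n + 1)) (i : Fin n) :
    extF g p i.castSucc = (g i).castSucc := by
  rw [extF, dif_pos (show ((i.castSucc : ℕ)) < n from i.isLt)]
  have h : (⟨((i.castSucc : Fin (n+1)) : ℕ), i.isLt⟩ : Fin n) = i := Fin.ext rfl
  rw [h]

lemma extF_last (g : Fin n → Fin n) (p : Fin (n + 1)) : extF g p (Fin.last n) = p := by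
  rw [extF, dif_neg (by simp)]

lemma resF_good {f : Fin (n + 1) → Fin (n + 1)} (hf : IsGood f) : IsGood (resF f) := by
  intro i
  constructor
  · apply Fin.ext
    rw [resF_coe hf, resF_coe hf]
    have : (resF f i).castSucc = f i.castSucc := Fin.ext (by rw [Fin.coe_castSucc, resF_coe hf])
    rw [this]
    exact_mod_cast congrArg Fin.val (hf i.castSucc).1
  · show ((resF f i : ℕ)) ≤ i
    rw [resF_coe hf]
    exact_mod_cast (hf i.castSucc).2

lemma extF_good {g : Fin n → Fin n} (hg : IsGood g) {p : Fin (n + 1)}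
    (hp : p = Fin.last n ∨ ∃ q : Fin n, p = q.castSucc ∧ g q = q) : IsGood (extF g p) := by
  intro i
  induction i using Fin.lastCases with
  | last =>
    rw [extF_last]
    constructor
    · rcases hp with rfl | ⟨q, rfl, hq⟩
      · rw [extF_last]
      · rw [extF_castSucc, hq]
    · rcases hp with rfl | ⟨q, rfl, hq⟩
      · exact le_refl _
      · exact Fin.le_last _
  | cast i =>
    rw [extF_castSucc]
    constructor
    · rw [extF_castSucc, (hg i).1]
    · exact Fin.castSucc_le_castSucc_iff.mpr (hg i).2

lemma resF_extF (g : Fin n → Fin n) (p : Fin (n + 1)) : resF (extF g p) = g := by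
  funext i
  have h : (extF g p i.castSucc : ℕ) < n := by
    rw [extF_castSucc]; exact_mod_cast (g i).isLt
  rw [resF, dif_pos h]
  apply Fin.ext
  show ((extF g p i.castSucc : ℕ)) = g i
  rw [extF_castSucc]
  rfl

lemma extF_resF {f : Fin (n + 1) → Fin (n + 1)} (hf : IsGood f) :
    extF (resF f) (f (Fin.last n)) = f := by
  funext i
  induction i using Fin.lastCases with
  | last => rw [extF_last]
  | cast i =>
    rw [extF_castSucc]
    apply Fin.ext
    rw [Fin.coe_castSucc, resF_coe hf]

lemma fixCard_eq (f : Fin (n + 1) → Fin (n + 1)) (hf : IsGood f) :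
    fixCard f = fixCard (resF f) + (if f (Fin.last n) = Fin.last n then 1 else 0) := by
  rw [fixCard, fixCard, Finset.card_filter, Finset.card_filter, Fin.sum_univ_castSucc]
  congr 1
  apply Finset.sum_congr rfl
  intro i _
  congr 1
  apply propext
  constructor
  · intro h
    apply Fin.ext
    rw [resF_coe hf, h, Fin.coe_castSucc]
  · intro h
    apply Fin.ext
    rw [Fin.coe_castSucc, ← resF_coe hf, h]

lemma Pc_zero_zero : Pc 0 0 = 1 := by decide

lemma Pc_zero_succ (k : ℕ) : Pc 0 (k + 1) = 0 := by
  rw [Pc, Finset.card_eq_zero, Finset.filter_eq_empty_iff]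
  intro f _
  suffices h : fixCard f = 0 by
    rintro ⟨-, hk⟩
    omega
  rw [fixCard]
  simp [Finset.filter_eq_empty_iff]

lemma Pc_succ_zero (n : ℕ) : Pc (n + 1) 0 = 0 := by
  rw [Pc, Finset.card_eq_zero, Finset.filter_eq_empty_iff]
  rintro f - ⟨hgood, hfix⟩
  have h0 : f 0 = 0 := le_antisymm (by exact_mod_cast (hgood 0).2) (Fin.zero_le _)
  rw [fixCard, Finset.card_eq_zero, Finset.filter_eq_empty_iff] at hfix
  exact hfix (Finset.mem_univ (0 : Fin (n+1))) h0

lemma Pc_rec (n k : ℕ) : Pc (n + 1) (k + 1) = Pc n k + (k + 1) * Pc n (k + 1) := by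
  classical
  rw [Pc, ← Finset.card_filter_add_card_filter_not
    (s := (Finset.univ : Finset (Fin (n+1) → Fin (n+1))).filter
      fun f => IsGood f ∧ fixCard f = k + 1) (p := fun f => f (Fin.last n) = Fin.last n)]
  rw [Finset.filter_filter, Finset.filter_filter]
  congr 1
  · -- last element is a fixed point
    rw [Pc]
    apply Finset.card_bij' (i := fun f _ => resF f) (j := fun g _ => extF g (Fin.last n))
    · intro f hf
      simp only [Finset.mem_filter, Finset.mem_univ, true_and] at hf ⊢
      obtain ⟨⟨hgood, hfix⟩, hlast⟩ := hf
      refine ⟨resF_good hgood, ?_⟩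
      rw [fixCard_eq f hgood, if_pos hlast] at hfix
      omega
    · intro g hg
      simp only [Finset.mem_filter, Finset.mem_univ, true_and] at hg ⊢
      obtain ⟨hgood, hfix⟩ := hg
      have hgood' : IsGood (extF g (Fin.last n)) := extF_good hgood (Or.inl rfl)
      have hlast : extF g (Fin.last n) (Fin.last n) = Fin.last n := extF_last _ _
      refine ⟨⟨hgood', ?_⟩, hlast⟩
      rw [fixCard_eq _ hgood', if_pos hlast, resF_extF]
      omega
    · intro f hf
      simp only [Finset.mem_filter, Finset.mem_univ, true_and] at hf
      rw [← hf.2]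
      exact extF_resF hf.1.1
    · intro g hg
      exact resF_extF g (Fin.last n)
  · -- last element is not fixed: maps to a fixed point of the restriction
    have hcard : (((Finset.univ : Finset (Fin n → Fin n)).filter
        (fun g => IsGood g ∧ fixCard g = k + 1)).sigma
        (fun g => Finset.univ.filter fun q => g q = q)).card = (k + 1) * Pc n (k + 1) := by
      rw [Finset.card_sigma, Pc, Finset.sum_congr rfl (fun g hg => ?_), Finset.sum_const,
        smul_eq_mul, mul_comm]
      simp only [Finset.mem_filter] at hg
      exact hg.2.2
    rw [← hcard]
    apply Eq.symm
    apply Finset.card_bij (i := fun (x : (_ : Fin n → Fin n) × Fin n) (_ : x ∈ _) => extF x.1 x.2.castSucc)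
    · intro x hx
      simp only [Finset.mem_sigma, Finset.mem_filter, Finset.mem_univ, true_and] at hx ⊢
      obtain ⟨⟨hgood, hfix⟩, hq⟩ := hx
      have hgood' : IsGood (extF x.1 x.2.castSucc) := extF_good hgood (Or.inr ⟨x.2, rfl, hq⟩)
      have hlast : extF x.1 x.2.castSucc (Fin.last n) = x.2.castSucc := extF_last _ _
      have hne : extF x.1 x.2.castSucc (Fin.last n) ≠ Fin.last n := by
        rw [hlast]
        intro h
        have := congrArg Fin.val h
        simp only [Fin.coe_castSucc, Fin.val_last] at this
        exact absurd this (Nat.ne_of_lt x.2.isLt)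
      refine ⟨⟨hgood', ?_⟩, hne⟩
      rw [fixCard_eq _ hgood', if_neg hne, resF_extF]
      exact hfix
    · intro x hx y hy hxy
      have h1 : x.1 = y.1 := by
        rw [← resF_extF x.1 x.2.castSucc, ← resF_extF y.1 y.2.castSucc, hxy]
      have h2 : x.2.castSucc = y.2.castSucc := by
        rw [← extF_last x.1 x.2.castSucc, ← extF_last y.1 y.2.castSucc, hxy]
      obtain ⟨x1, x2⟩ := x
      obtain ⟨y1, y2⟩ := y
      simp only at h1 h2
      subst h1
      simp only [Sigma.mk.inj_iff, heq_eq_eq, true_and]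
      exact Fin.castSucc_injective n h2
    · intro f hf
      simp only [Finset.mem_filter, Finset.mem_univ, true_and] at hf
      obtain ⟨⟨hgood, hfix⟩, hne⟩ := hf
      have hlt : (f (Fin.last n) : ℕ) < n := by
        have hle : (f (Fin.last n) : ℕ) ≤ n := by exact_mod_cast (hgood (Fin.last n)).2
        rcases lt_or_eq_of_le hle with h | h
        · exact h
        · exact absurd (Fin.ext h : f (Fin.last n) = Fin.last n) hne
      refine ⟨⟨resF f, ⟨f (Fin.last n), hlt⟩⟩, ?_, ?_⟩
      · simp only [Finset.mem_sigma, Finset.mem_filter, Finset.mem_univ, true_and]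
        refine ⟨⟨resF_good hgood, ?_⟩, ?_⟩
        · rw [fixCard_eq f hgood, if_neg hne] at hfix
          exact hfix
        · apply Fin.ext
          rw [resF_coe hgood]
          have hcs : (⟨(f (Fin.last n) : ℕ), hlt⟩ : Fin n).castSucc = f (Fin.last n) :=
            Fin.ext rfl
          rw [hcs]
          exact_mod_cast congrArg Fin.val (hgood (Fin.last n)).1
      · have hcs : (⟨(f (Fin.last n) : ℕ), hlt⟩ : Fin n).castSucc = f (Fin.last n) :=
          Fin.ext rfl
        rw [hcs]
        exact extF_resF hgood


lemma Pc_eq_Wc : ∀ n k, Pc n k = Wc n k := by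
  intro n
  induction n with
  | zero =>
    intro k
    cases k with
    | zero => rw [Pc_zero_zero, Wc_zero_zero]
    | succ k => rw [Pc_zero_succ, Wc_zero_succ]
  | succ n ih =>
    intro k
    cases k with
    | zero => rw [Pc_succ_zero, Wc_succ_zero]
    | succ k => rw [Pc_rec, Wc_rec, ih, ih]

lemma bell_sum (n : ℕ) : bellNumber n = ∑ k ∈ Finset.range (n + 1), Pc n k := by
  rw [BellAux.bell_eq]
  rw [Finset.card_eq_sum_card_fiberwise (f := fixCard) (t := Finset.range (n + 1)) ?_]
  · apply Finset.sum_congr rfl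
    intro k _
    rw [Pc, Finset.filter_filter]
  · intro f _
    rw [Finset.mem_coe, Finset.mem_range]
    have h : fixCard f ≤ n := le_trans (Finset.card_filter_le _ _) (by simp)
    omega

end Part2

end BellAux


/-- For all `n ≥ 2`,
`∑_{k=1}^{n-1} ∑_{n_1+⋯+n_k=n, n_i ≥ 1} ∏_{j=1}^k j^(n_j - 1) = B_n - 1`. -/
theorem stmt5 (n : ℕ) (hn : 2 ≤ n) :
    ∑ k ∈ Finset.Icc 1 (n - 1),
      ∑ c ∈ (Finset.Nat.antidiagonalTuple k n).filter (fun c => ∀ j, 0 < c j),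
        ∏ j : Fin k, ((j : ℕ) + 1) ^ (c j - 1) = bellNumber n - 1 := by
  obtain ⟨m, rfl⟩ : ∃ m, n = m + 2 := ⟨n - 2, by omega⟩
  have hsum : ∑ k ∈ Finset.Icc 1 (m + 2 - 1),
      ∑ c ∈ (Finset.Nat.antidiagonalTuple k (m + 2)).filter (fun c => ∀ j, 0 < c j),
        ∏ j : Fin k, ((j : ℕ) + 1) ^ (c j - 1) = ∑ k ∈ Finset.Icc 1 (m + 1), BellAux.Part2.Wc (m + 2) k := by
    rfl
  rw [hsum]
  clear hsum
  have hbell : bellNumber (m + 2) = ∑ k ∈ Finset.Icc 1 (m + 1), BellAux.Part2.Wc (m + 2) k + 1 := by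
    rw [BellAux.Part2.bell_sum]
    have h1 : ∑ k ∈ Finset.range (m + 2 + 1), BellAux.Part2.Pc (m + 2) k
        = ∑ k ∈ Finset.range (m + 2 + 1), BellAux.Part2.Wc (m + 2) k :=
      Finset.sum_congr rfl fun k _ => BellAux.Part2.Pc_eq_Wc _ _
    rw [h1]
    rw [Finset.sum_range_succ']
    have h2 : ∑ i ∈ Finset.range (m + 2), BellAux.Part2.Wc (m + 2) (i + 1)
        = ∑ k ∈ Finset.Icc 1 (m + 2), BellAux.Part2.Wc (m + 2) k := by
      rw [← Finset.Ico_add_one_right_eq_Icc, Finset.sum_Ico_eq_sum_range]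
      apply Finset.sum_congr (by norm_num)
      intro i _
      congr 1
      omega
    rw [h2, BellAux.Part2.Wc_succ_zero, add_zero]
    have h3 : ∑ k ∈ Finset.Icc 1 (m + 2), BellAux.Part2.Wc (m + 2) k
        = ∑ k ∈ Finset.Icc 1 (m + 1), BellAux.Part2.Wc (m + 2) k + BellAux.Part2.Wc (m + 2) (m + 2) := by
      exact Finset.sum_Icc_succ_top (f := fun k => BellAux.Part2.Wc (m + 2) k) (by omega)
    rw [h3, BellAux.Part2.Wc_diag]
  omega
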